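/- Let W be an nT × np real matrix and, for γ ∈ ℝ^{np}, write γ = (γ_1',…,γ_n')' with each γ_i ∈ ℝ^p. Consider the MCP-penalized clustering objective Q(γ) = (1/2)‖y − Wγ‖₂² + Σ_{1≤i<j≤n} ρ_MCP(‖γ_i − γ_j‖₂; λ, θ). If θ·λ_min(W'W) ≥ n, then Q is a convex function on ℝ^{np}. (Key facts used: Σ_{1≤i<j≤n}‖γ_i − γ_j‖₂² = n Σ_{i=1}^n ‖γ_i‖₂² − ‖Σ_{i=1}^n γ_i‖₂² ≤ n‖γ‖₂², and v ↦ ρ_MCP(‖v‖₂; λ, θ) + ‖v‖₂²/(2θ) is convex on ℝ^p since it is the composition of a convex nondecreasing function with a norm.) -/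

import Mathlib

open Matrix Set Filter

noncomputable section

/-- Euclidean norm of a vector. -/
def norm2 {α : Type*} [Fintype α] (v : α → ℝ) : ℝ := Real.sqrt (∑ i, v i ^ 2)

/-- Smallest eigenvalue, as the infimum of the Rayleigh quotient over the unit sphere. -/
def lambdaMin {α : Type*} [Fintype α] (A : Matrix α α ℝ) : ℝ :=
  ⨅ v : {v : α → ℝ // norm2 v = 1}, ∑ i, ∑ j, v.1 i * A i j * v.1 j

/-- The minimax concave penalty (MCP) with parameters `λ > 0`, `θ > 0`. -/
def mcp (lam th t : ℝ) : ℝ :=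
  if |t| ≤ th * lam then lam * |t| - t ^ 2 / (2 * th) else th * lam ^ 2 / 2

/-! ### Auxiliary lemmas -/

lemma norm2_nonneg {α : Type*} [Fintype α] (v : α → ℝ) : 0 ≤ norm2 v := Real.sqrt_nonneg _

lemma norm2_sq {α : Type*} [Fintype α] (v : α → ℝ) : norm2 v ^ 2 = ∑ i, v i ^ 2 :=
  Real.sq_sqrt (Finset.sum_nonneg fun _ _ => sq_nonneg _)

lemma norm2_smul {α : Type*} [Fintype α] (c : ℝ) (v : α → ℝ) :
    norm2 (c • v) = |c| * norm2 v := by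
  unfold norm2
  simp only [Pi.smul_apply, smul_eq_mul, mul_pow, ← Finset.mul_sum]
  rw [Real.sqrt_mul (sq_nonneg c), Real.sqrt_sq_eq_abs]

lemma norm2_add_le {α : Type*} [Fintype α] (v w : α → ℝ) :
    norm2 (v + w) ≤ norm2 v + norm2 w := by
  have hcs : (∑ i, v i * w i) ≤ norm2 v * norm2 w := by
    have h1 : (∑ i, v i * w i) ^ 2 ≤ (∑ i, v i ^ 2) * ∑ i, w i ^ 2 :=
      Finset.sum_mul_sq_le_sq_mul_sq _ _ _
    have h2 : |∑ i, v i * w i| ≤ norm2 v * norm2 w := by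
      rw [← Real.sqrt_sq_eq_abs]
      calc Real.sqrt ((∑ i, v i * w i) ^ 2) ≤ Real.sqrt ((∑ i, v i ^ 2) * ∑ i, w i ^ 2) :=
            Real.sqrt_le_sqrt h1
        _ = norm2 v * norm2 w := by
            rw [Real.sqrt_mul (Finset.sum_nonneg fun _ _ => sq_nonneg _)]; rfl
    exact (le_abs_self _).trans h2
  have hexp : ∑ i, (v i + w i) ^ 2 = (∑ i, v i ^ 2) + 2 * (∑ i, v i * w i) + ∑ i, w i ^ 2 := by
    have : ∀ i : α, (v i + w i) ^ 2 = v i ^ 2 + 2 * (v i * w i) + w i ^ 2 := fun i => by ring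
    simp_rw [this, Finset.sum_add_distrib, Finset.mul_sum]
  have hle : ∑ i, (v i + w i) ^ 2 ≤ (norm2 v + norm2 w) ^ 2 := by
    have hv := norm2_sq v; have hw := norm2_sq w
    nlinarith [norm2_nonneg v, norm2_nonneg w]
  calc norm2 (v + w) = Real.sqrt (∑ i, (v i + w i) ^ 2) := by
        unfold norm2; simp [Pi.add_apply]
    _ ≤ Real.sqrt ((norm2 v + norm2 w) ^ 2) := Real.sqrt_le_sqrt hle
    _ = norm2 v + norm2 w := by
        rw [Real.sqrt_sq (add_nonneg (norm2_nonneg v) (norm2_nonneg w))]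

lemma mcp_decomp (lam th t : ℝ) (hth : 0 < th) (ht : 0 ≤ t) :
    mcp lam th t = lam * t + (max (t - th * lam) 0) ^ 2 / (2 * th) - t ^ 2 / (2 * th) := by
  unfold mcp
  rw [abs_of_nonneg ht]
  split_ifs with h
  · rw [max_eq_right (by linarith)]
    ring
  · push_neg at h
    rw [max_eq_left (by linarith)]
    field_simp
    ring

lemma convexOn_univ_sum {ι E : Type*} [AddCommGroup E] [Module ℝ E] (t : Finset ι)
    (f : ι → E → ℝ) (h : ∀ i ∈ t, ConvexOn ℝ Set.univ (f i)) :
    ConvexOn ℝ Set.univ (fun x => ∑ i ∈ t, f i x) := by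
  classical
  induction t using Finset.induction_on with
  | empty => simpa using convexOn_const (0 : ℝ) convex_univ
  | insert i s hx ih =>
    simp_rw [Finset.sum_insert hx]
    exact (h i (Finset.mem_insert_self _ _)).add
      (ih fun j hj => h j (Finset.mem_insert_of_mem hj))

lemma phi_convex {α : Type*} [Fintype α] (lam th : ℝ) (hlam : 0 < lam) (hth : 0 < th) :
    ConvexOn ℝ Set.univ
      (fun v : α → ℝ => lam * norm2 v + (max (norm2 v - th * lam) 0) ^ 2 / (2 * th)) := by
  set c := th * lam with hc
  refine ⟨convex_univ, fun v _ w _ a b ha hb hab => ?_⟩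
  set nv := norm2 v with hnv
  set nw := norm2 w with hnw
  have htri : norm2 (a • v + b • w) ≤ a * nv + b * nw := by
    calc norm2 (a • v + b • w) ≤ norm2 (a • v) + norm2 (b • w) := norm2_add_le _ _
      _ = a * nv + b * nw := by
          rw [norm2_smul, norm2_smul, abs_of_nonneg ha, abs_of_nonneg hb]
  set M : ℝ → ℝ := fun t => max (t - c) 0 with hM
  have hMnn : ∀ t, 0 ≤ M t := fun t => le_max_right _ _
  have hM1 : M (norm2 (a • v + b • w)) ≤ a * M nv + b * M nw := by
    apply max_le
    · have h1 : nv - c ≤ M nv := le_max_left _ _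
      have h2 : nw - c ≤ M nw := le_max_left _ _
      have e : a * (nv - c) + b * (nw - c) = a * nv + b * nw - c := by
        linear_combination (-c) * hab
      linarith [mul_le_mul_of_nonneg_left h1 ha, mul_le_mul_of_nonneg_left h2 hb]
    · exact add_nonneg (mul_nonneg ha (hMnn nv)) (mul_nonneg hb (hMnn nw))
  have hsq : M (norm2 (a • v + b • w)) ^ 2 ≤ (a * M nv + b * M nw) ^ 2 :=
    pow_le_pow_left₀ (hMnn _) hM1 2
  have hsq2 : (a * M nv + b * M nw) ^ 2 ≤ a * (M nv) ^ 2 + b * (M nw) ^ 2 := by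
    nlinarith [mul_nonneg (mul_nonneg ha hb) (sq_nonneg (M nv - M nw))]
  have hterm1 : lam * norm2 (a • v + b • w) ≤ a * (lam * nv) + b * (lam * nw) := by
    have := mul_le_mul_of_nonneg_left htri hlam.le
    nlinarith [this]
  have h2θ : (0:ℝ) < 2 * th := by linarith
  have hfin2 : M (norm2 (a • v + b • w)) ^ 2 / (2 * th) ≤
      a * ((M nv) ^ 2 / (2 * th)) + b * ((M nw) ^ 2 / (2 * th)) := by
    have h3 : M (norm2 (a • v + b • w)) ^ 2 / (2 * th) ≤
        (a * (M nv) ^ 2 + b * (M nw) ^ 2) / (2 * th) := by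
      gcongr
      exact hsq.trans hsq2
    calc M (norm2 (a • v + b • w)) ^ 2 / (2 * th)
        ≤ (a * (M nv) ^ 2 + b * (M nw) ^ 2) / (2 * th) := h3
      _ = a * ((M nv) ^ 2 / (2 * th)) + b * ((M nw) ^ 2 / (2 * th)) := by ring
  simp only [smul_eq_mul]
  have e : a * (lam * nv + M nv ^ 2 / (2 * th)) + b * (lam * nw + M nw ^ 2 / (2 * th))
      = (a * (lam * nv) + b * (lam * nw))
        + (a * (M nv ^ 2 / (2 * th)) + b * (M nw ^ 2 / (2 * th))) := by ring
  calc lam * norm2 (a • v + b • w) + M (norm2 (a • v + b • w)) ^ 2 / (2 * th)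
      ≤ (a * (lam * nv) + b * (lam * nw))
        + (a * (M nv ^ 2 / (2 * th)) + b * (M nw ^ 2 / (2 * th))) := add_le_add hterm1 hfin2
    _ = a * (lam * nv + M nv ^ 2 / (2 * th)) + b * (lam * nw + M nw ^ 2 / (2 * th)) := e.symm

lemma rayleigh_eq {ι κ : Type*} [Fintype ι] [Fintype κ] (W : Matrix ι κ ℝ) (v : κ → ℝ) :
    ∑ i, ∑ j, v i * (Wᵀ * W) i j * v j = ∑ k, (W.mulVec v k) ^ 2 := by
  simp only [Matrix.mul_apply, Matrix.transpose_apply, Matrix.mulVec, dotProduct]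
  have step1 : ∀ i j : κ, v i * (∑ k, W k i * W k j) * v j
      = ∑ k, (W k i * v i) * (W k j * v j) := by
    intro i j
    rw [mul_comm, ← mul_assoc, Finset.mul_sum]
    refine Finset.sum_congr rfl fun k _ => by ring
  simp_rw [step1]
  have h1 : ∀ i : κ, (∑ j : κ, ∑ k : ι, (W k i * v i) * (W k j * v j))
      = ∑ k : ι, ∑ j : κ, (W k i * v i) * (W k j * v j) := fun i => Finset.sum_comm
  simp_rw [h1]
  rw [Finset.sum_comm]
  refine Finset.sum_congr rfl fun k _ => ?_
  rw [sq, Finset.sum_mul_sum]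

lemma lambdaMin_mul_le {ι κ : Type*} [Fintype ι] [Fintype κ] (W : Matrix ι κ ℝ) (w : κ → ℝ) :
    lambdaMin (Wᵀ * W) * ∑ k, w k ^ 2 ≤ ∑ it, (W.mulVec w it) ^ 2 := by
  have hbdd : BddBelow (Set.range fun u : {v : κ → ℝ // norm2 v = 1} =>
      ∑ i, ∑ j, u.1 i * (Wᵀ * W) i j * u.1 j) := by
    refine ⟨0, ?_⟩
    rintro x ⟨u, rfl⟩
    show (0:ℝ) ≤ ∑ i, ∑ j, u.1 i * (Wᵀ * W) i j * u.1 j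
    rw [rayleigh_eq]
    positivity
  by_cases hw : w = 0
  · subst hw
    simp
  · have hssum : 0 < ∑ k, w k ^ 2 := by
      obtain ⟨k, hk⟩ := Function.ne_iff.mp hw
      exact Finset.sum_pos' (fun _ _ => sq_nonneg _)
        ⟨k, Finset.mem_univ _, sq_pos_of_ne_zero hk⟩
    set s := norm2 w with hs
    have hspos : 0 < s := Real.sqrt_pos.mpr hssum
    have hu : norm2 (s⁻¹ • w) = 1 := by
      rw [norm2_smul, abs_of_nonneg (inv_nonneg.mpr hspos.le), inv_mul_cancel₀ hspos.ne']
    have hle := ciInf_le hbdd (⟨s⁻¹ • w, hu⟩ : {v : κ → ℝ // norm2 v = 1})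
    have hscale : (∑ i, ∑ j, (s⁻¹ • w) i * (Wᵀ * W) i j * (s⁻¹ • w) j)
        = s⁻¹ ^ 2 * ∑ i, ∑ j, w i * (Wᵀ * W) i j * w j := by
      rw [Finset.mul_sum]
      refine Finset.sum_congr rfl fun i _ => ?_
      rw [Finset.mul_sum]
      exact Finset.sum_congr rfl fun j _ => by simp [Pi.smul_apply, smul_eq_mul]; ring
    rw [hscale, rayleigh_eq] at hle
    have hs2 : s ^ 2 = ∑ k, w k ^ 2 := norm2_sq w
    have := mul_le_mul_of_nonneg_right hle (sq_nonneg s)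
    have heq : s⁻¹ ^ 2 * (∑ it, (W.mulVec w it) ^ 2) * s ^ 2 = ∑ it, (W.mulVec w it) ^ 2 := by
      field_simp
    rw [heq] at this
    calc lambdaMin (Wᵀ * W) * ∑ k, w k ^ 2 = lambdaMin (Wᵀ * W) * s ^ 2 := by rw [hs2]
      _ ≤ ∑ it, (W.mulVec w it) ^ 2 := this

lemma scalar_sum_sq (n : ℕ) (x : Fin n → ℝ) :
    ∑ i, ∑ j, (x i - x j) ^ 2 ≤ 2 * n * ∑ i, x i ^ 2 := by
  have hexp : ∀ i j : Fin n, (x i - x j) ^ 2 = x i ^ 2 + x j ^ 2 - 2 * (x i * x j) :=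
    fun i j => by ring
  simp_rw [hexp, Finset.sum_sub_distrib, Finset.sum_add_distrib, Finset.sum_const,
    Finset.card_univ, Fintype.card_fin, nsmul_eq_mul, ← Finset.mul_sum, ← Finset.sum_mul]
  have h2 : (∑ i, x i * ∑ j, x j : ℝ) = (∑ i, x i) ^ 2 := by
    rw [← Finset.sum_mul, sq]
  nlinarith [sq_nonneg (∑ i, x i)]

lemma pair_sum_le (n p : ℕ) (w : Fin n × Fin p → ℝ) :
    ∑ ij ∈ Finset.univ.filter (fun ij : Fin n × Fin n => ij.1 < ij.2),
        ∑ a, (w (ij.1, a) - w (ij.2, a)) ^ 2 ≤ (n : ℝ) * ∑ k, w k ^ 2 := by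
  classical
  set g : Fin n × Fin n → ℝ := fun ij => ∑ a, (w (ij.1, a) - w (ij.2, a)) ^ 2 with hg
  have hgnn : ∀ ij, 0 ≤ g ij := fun ij => Finset.sum_nonneg fun _ _ => sq_nonneg _
  have hgsymm : ∀ ij : Fin n × Fin n, g (ij.2, ij.1) = g ij := by
    intro ij
    refine Finset.sum_congr rfl fun a _ => by ring
  set P := Finset.univ.filter (fun ij : Fin n × Fin n => ij.1 < ij.2) with hP
  set P' := Finset.univ.filter (fun ij : Fin n × Fin n => ij.2 < ij.1) with hP'
  have hswap : ∑ ij ∈ P, g ij = ∑ ij ∈ P', g ij := by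
    refine Finset.sum_nbij' (fun ij => (ij.2, ij.1)) (fun ij => (ij.2, ij.1)) ?_ ?_ ?_ ?_ ?_
    · intro a ha; simp only [hP, hP', Finset.mem_filter, Finset.mem_univ, true_and] at *; exact ha
    · intro a ha; simp only [hP, hP', Finset.mem_filter, Finset.mem_univ, true_and] at *; exact ha
    · intro a _; rfl
    · intro a _; rfl
    · intro a _; exact (hgsymm a).symm
  have hdisj : Disjoint P P' := by
    rw [Finset.disjoint_left]
    intro a haP haP'
    simp only [hP, hP', Finset.mem_filter, Finset.mem_univ, true_and] at haP haP'
    exact absurd haP' (not_lt.mpr haP.le)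
  have hsub : ∑ ij ∈ P, g ij + ∑ ij ∈ P', g ij ≤ ∑ ij : Fin n × Fin n, g ij := by
    rw [← Finset.sum_union hdisj]
    exact Finset.sum_le_sum_of_subset_of_nonneg (Finset.subset_univ _)
      (fun i _ _ => hgnn i)
  have huniv : ∑ ij : Fin n × Fin n, g ij ≤ 2 * (n : ℝ) * ∑ k, w k ^ 2 := by
    rw [Fintype.sum_prod_type]
    have hswap2 : ∑ i : Fin n, ∑ j : Fin n, g (i, j)
        = ∑ a : Fin p, ∑ i : Fin n, ∑ j : Fin n, (w (i, a) - w (j, a)) ^ 2 := by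
      simp only [hg]
      have h1 : ∀ i : Fin n, (∑ j : Fin n, ∑ a : Fin p, (w (i, a) - w (j, a)) ^ 2)
          = ∑ a : Fin p, ∑ j : Fin n, (w (i, a) - w (j, a)) ^ 2 := fun i => Finset.sum_comm
      simp_rw [h1]
      exact Finset.sum_comm
    rw [hswap2]
    have hbound : ∀ a : Fin p, ∑ i : Fin n, ∑ j : Fin n, (w (i, a) - w (j, a)) ^ 2
        ≤ 2 * (n : ℝ) * ∑ i : Fin n, w (i, a) ^ 2 := fun a => scalar_sum_sq n (fun i => w (i, a))
    calc ∑ a : Fin p, ∑ i : Fin n, ∑ j : Fin n, (w (i, a) - w (j, a)) ^ 2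
        ≤ ∑ a : Fin p, 2 * (n : ℝ) * ∑ i : Fin n, w (i, a) ^ 2 :=
          Finset.sum_le_sum fun a _ => hbound a
      _ = 2 * (n : ℝ) * ∑ k, w k ^ 2 := by
          rw [← Finset.mul_sum, Fintype.sum_prod_type]
          congr 1
          exact Finset.sum_comm
  linarith [hswap ▸ hsub, huniv]

/-- The difference linear map `γ ↦ (a ↦ γ (i, a) - γ (j, a))`. -/
def dmap (n p : ℕ) (i j : Fin n) : ((Fin n × Fin p) → ℝ) →ₗ[ℝ] (Fin p → ℝ) where
  toFun γ := fun a => γ (i, a) - γ (j, a)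
  map_add' γ δ := by funext a; simp [Pi.add_apply]; ring
  map_smul' c γ := by funext a; simp [Pi.smul_apply, smul_eq_mul]; ring

/-- if `θ·λ_min(W'W) ≥ n`, then the MCP-penalized clustering
objective `Q(γ) = (1/2)‖y − Wγ‖₂² + Σ_{i<j} ρ_MCP(‖γ_i − γ_j‖₂; λ, θ)` is convex. -/
theorem mcp_objective_globally_convex
    (n T p : ℕ) (hn : 0 < n) (hT : 0 < T) (hp : 0 < p)
    (y : Fin n × Fin T → ℝ)
    (W : Matrix (Fin n × Fin T) (Fin n × Fin p) ℝ)
    (lam th : ℝ) (hlam : 0 < lam) (hth : 0 < th)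
    (Q : (Fin n × Fin p → ℝ) → ℝ)
    (hQ : Q = fun γ =>
      (1 / 2) * ∑ it, (y it - W.mulVec γ it) ^ 2 +
        ∑ ij ∈ Finset.univ.filter (fun ij : Fin n × Fin n => ij.1 < ij.2),
          mcp lam th (norm2 (fun a => γ (ij.1, a) - γ (ij.2, a))))
    (hconv : (n : ℝ) ≤ th * lambdaMin (Wᵀ * W)) :
    ConvexOn ℝ Set.univ Q := by
  classical
  -- key quadratic bound
  have key : ∀ w : Fin n × Fin p → ℝ,
      ∑ ij ∈ Finset.univ.filter (fun ij : Fin n × Fin n => ij.1 < ij.2),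
        ∑ a, (w (ij.1, a) - w (ij.2, a)) ^ 2 ≤ th * ∑ it, (W.mulVec w it) ^ 2 := by
    intro w
    have h1 := pair_sum_le n p w
    have h2 := lambdaMin_mul_le W w
    have hnn : (0:ℝ) ≤ ∑ k, w k ^ 2 := Finset.sum_nonneg fun _ _ => sq_nonneg _
    have h3 : (n : ℝ) * ∑ k, w k ^ 2 ≤ (th * lambdaMin (Wᵀ * W)) * ∑ k, w k ^ 2 :=
      mul_le_mul_of_nonneg_right hconv hnn
    have h4 : (th * lambdaMin (Wᵀ * W)) * ∑ k, w k ^ 2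
        = th * (lambdaMin (Wᵀ * W) * ∑ k, w k ^ 2) := by ring
    have h5 : th * (lambdaMin (Wᵀ * W) * ∑ k, w k ^ 2)
        ≤ th * ∑ it, (W.mulVec w it) ^ 2 := mul_le_mul_of_nonneg_left h2 hth.le
    linarith [h4 ▸ h3]
  -- convexity of the quadratic part
  have hAconv : ConvexOn ℝ Set.univ (fun γ : Fin n × Fin p → ℝ =>
      (1 / 2) * ∑ it, (y it - W.mulVec γ it) ^ 2 -
        (1 / (2 * th)) * ∑ ij ∈ Finset.univ.filter (fun ij : Fin n × Fin n => ij.1 < ij.2),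
          ∑ a, (γ (ij.1, a) - γ (ij.2, a)) ^ 2) := by
    refine ⟨convex_univ, fun γ _ δ _ a b ha hb hab => ?_⟩
    have hb' : b = 1 - a := by linarith
    subst hb'
    simp only [smul_eq_mul]
    have hterm : ∀ it, (y it - W.mulVec (a • γ + (1 - a) • δ) it) ^ 2
        = a * (y it - W.mulVec γ it) ^ 2 + (1 - a) * (y it - W.mulVec δ it) ^ 2
          - a * (1 - a) * (W.mulVec (γ - δ) it) ^ 2 := by
      intro it
      have e1 : W.mulVec (a • γ + (1 - a) • δ) it
          = a * W.mulVec γ it + (1 - a) * W.mulVec δ it := by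
        simp [Matrix.mulVec_add, Matrix.mulVec_smul]
      have e2 : W.mulVec (γ - δ) it = W.mulVec γ it - W.mulVec δ it := by
        simp [Matrix.mulVec_sub]
      rw [e1, e2]; ring
    have h1 : ∑ it, (y it - W.mulVec (a • γ + (1 - a) • δ) it) ^ 2
        = a * ∑ it, (y it - W.mulVec γ it) ^ 2
          + (1 - a) * ∑ it, (y it - W.mulVec δ it) ^ 2
          - a * (1 - a) * ∑ it, (W.mulVec (γ - δ) it) ^ 2 := by
      simp_rw [hterm, Finset.sum_sub_distrib, Finset.sum_add_distrib, ← Finset.mul_sum]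
    have hterm2 : ∀ ij : Fin n × Fin n, ∀ c : Fin p,
        ((a • γ + (1 - a) • δ) (ij.1, c) - (a • γ + (1 - a) • δ) (ij.2, c)) ^ 2
        = a * (γ (ij.1, c) - γ (ij.2, c)) ^ 2 + (1 - a) * (δ (ij.1, c) - δ (ij.2, c)) ^ 2
          - a * (1 - a) * ((γ - δ) (ij.1, c) - (γ - δ) (ij.2, c)) ^ 2 := by
      intro ij c
      simp only [Pi.add_apply, Pi.smul_apply, Pi.sub_apply, smul_eq_mul]
      ring
    have h2 : ∑ ij ∈ Finset.univ.filter (fun ij : Fin n × Fin n => ij.1 < ij.2),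
          ∑ c, ((a • γ + (1 - a) • δ) (ij.1, c) - (a • γ + (1 - a) • δ) (ij.2, c)) ^ 2
        = a * ∑ ij ∈ Finset.univ.filter (fun ij : Fin n × Fin n => ij.1 < ij.2),
            ∑ c, (γ (ij.1, c) - γ (ij.2, c)) ^ 2
          + (1 - a) * ∑ ij ∈ Finset.univ.filter (fun ij : Fin n × Fin n => ij.1 < ij.2),
              ∑ c, (δ (ij.1, c) - δ (ij.2, c)) ^ 2
          - a * (1 - a) * ∑ ij ∈ Finset.univ.filter (fun ij : Fin n × Fin n => ij.1 < ij.2),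
              ∑ c, ((γ - δ) (ij.1, c) - (γ - δ) (ij.2, c)) ^ 2 := by
      simp_rw [hterm2, Finset.sum_sub_distrib, Finset.sum_add_distrib, ← Finset.mul_sum]
    rw [h1, h2]
    have hkey := key (γ - δ)
    have h2θ : (0:ℝ) < 2 * th := by linarith
    have hkey' : (1 / (2 * th)) * ∑ ij ∈ Finset.univ.filter
          (fun ij : Fin n × Fin n => ij.1 < ij.2),
          ∑ c, ((γ - δ) (ij.1, c) - (γ - δ) (ij.2, c)) ^ 2
        ≤ (1 / 2) * ∑ it, (W.mulVec (γ - δ) it) ^ 2 := by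
      rw [div_mul_eq_mul_div, div_le_iff₀ h2θ]
      calc (1 : ℝ) * ∑ ij ∈ Finset.univ.filter (fun ij : Fin n × Fin n => ij.1 < ij.2),
            ∑ c, ((γ - δ) (ij.1, c) - (γ - δ) (ij.2, c)) ^ 2
          = ∑ ij ∈ Finset.univ.filter (fun ij : Fin n × Fin n => ij.1 < ij.2),
            ∑ c, ((γ - δ) (ij.1, c) - (γ - δ) (ij.2, c)) ^ 2 := one_mul _
        _ ≤ th * ∑ it, (W.mulVec (γ - δ) it) ^ 2 := hkey
        _ = (1 / 2) * (∑ it, (W.mulVec (γ - δ) it) ^ 2) * (2 * th) := by ring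
    nlinarith [mul_nonneg (mul_nonneg ha hb) (sub_nonneg.mpr hkey')]
  -- convexity of the penalty part
  have hPenconv : ConvexOn ℝ Set.univ (fun γ : Fin n × Fin p → ℝ =>
      ∑ ij ∈ Finset.univ.filter (fun ij : Fin n × Fin n => ij.1 < ij.2),
        (lam * norm2 (fun a => γ (ij.1, a) - γ (ij.2, a)) +
          (max (norm2 (fun a => γ (ij.1, a) - γ (ij.2, a)) - th * lam) 0) ^ 2 / (2 * th))) := by
    apply convexOn_univ_sum
    intro ij _
    have hcomp := (phi_convex (α := Fin p) lam th hlam hth).comp_linearMap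
      (dmap n p ij.1 ij.2)
    rw [Set.preimage_univ] at hcomp
    exact hcomp
  -- decomposition of Q
  have hQdecomp : Q = fun γ =>
      ((1 / 2) * ∑ it, (y it - W.mulVec γ it) ^ 2 -
        (1 / (2 * th)) * ∑ ij ∈ Finset.univ.filter (fun ij : Fin n × Fin n => ij.1 < ij.2),
          ∑ a, (γ (ij.1, a) - γ (ij.2, a)) ^ 2) +
      (∑ ij ∈ Finset.univ.filter (fun ij : Fin n × Fin n => ij.1 < ij.2),
        (lam * norm2 (fun a => γ (ij.1, a) - γ (ij.2, a)) +
          (max (norm2 (fun a => γ (ij.1, a) - γ (ij.2, a)) - th * lam) 0) ^ 2 / (2 * th))) := by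
    rw [hQ]
    funext γ
    have hpt : ∀ ij : Fin n × Fin n,
        mcp lam th (norm2 (fun a => γ (ij.1, a) - γ (ij.2, a)))
        = (lam * norm2 (fun a => γ (ij.1, a) - γ (ij.2, a)) +
            (max (norm2 (fun a => γ (ij.1, a) - γ (ij.2, a)) - th * lam) 0) ^ 2 / (2 * th))
          - (1 / (2 * th)) * ∑ a, (γ (ij.1, a) - γ (ij.2, a)) ^ 2 := by
      intro ij
      rw [mcp_decomp lam th _ hth (norm2_nonneg _), ← norm2_sq (fun a => γ (ij.1, a) - γ (ij.2, a))]
      ring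
    simp_rw [hpt, Finset.sum_sub_distrib, ← Finset.mul_sum]
    ring
  rw [hQdecomp]
  exact hAconv.add hPenconv
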